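/- For every element g of the generalized Thompson group F(p) there exist m, n ≥ 0 and natural numbers i_1 ≤ i_2 ≤ … ≤ i_m and j_1 ≤ j_2 ≤ … ≤ j_n such that g = x_{i_1} x_{i_2} ⋯ x_{i_m} · x_{j_n}^{-1} ⋯ x_{j_2}^{-1} x_{j_1}^{-1} in F(p). -/

import Mathlib

/-- Relators of the generalized Thompson group `F(p)`:
`x_j x_i x_{j+p-1}⁻¹ x_i⁻¹` for `i < j`. -/
def ThompsonRels (p : ℕ) : Set (FreeGroup ℕ) :=
  {r | ∃ i j : ℕ, i < j ∧
    r = FreeGroup.of j * FreeGroup.of i * (FreeGroup.of (j + p - 1))⁻¹ * (FreeGroup.of i)⁻¹}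

/-- The generalized Thompson group `F(p)` as a presented group. -/
abbrev FP (p : ℕ) := PresentedGroup (ThompsonRels p)

/-- The generator `x_i` of `F(p)`. -/
def xgen (p : ℕ) (i : ℕ) : FP p := PresentedGroup.of i

namespace ThompsonAux

/-- product of generators indexed by a list -/
def Pw (p : ℕ) (l : List ℕ) : FP p := (l.map (xgen p)).prod

@[simp] lemma Pw_nil (p : ℕ) : Pw p [] = 1 := rfl

@[simp] lemma Pw_cons (p : ℕ) (a : ℕ) (l : List ℕ) :
    Pw p (a :: l) = xgen p a * Pw p l := by
  simp [Pw]

lemma rel1 (p : ℕ) {i j : ℕ} (hij : i < j) :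
    xgen p j * xgen p i = xgen p i * xgen p (j + p - 1) := by
  have hmem : (FreeGroup.of j * FreeGroup.of i * (FreeGroup.of (j + p - 1))⁻¹ *
      (FreeGroup.of i)⁻¹ : FreeGroup ℕ) ∈ ThompsonRels p := ⟨i, j, hij, rfl⟩
  have h1 : PresentedGroup.mk (ThompsonRels p)
      (FreeGroup.of j * FreeGroup.of i * (FreeGroup.of (j + p - 1))⁻¹ *
        (FreeGroup.of i)⁻¹) = 1 := by
    have : (FreeGroup.of j * FreeGroup.of i * (FreeGroup.of (j + p - 1))⁻¹ *
        (FreeGroup.of i)⁻¹ : FreeGroup ℕ) ∈ Subgroup.normalClosure (ThompsonRels p) :=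
      Subgroup.subset_normalClosure hmem
    exact (QuotientGroup.eq_one_iff _).mpr this
  have h2 : xgen p j * xgen p i * (xgen p (j + p - 1))⁻¹ * (xgen p i)⁻¹ = 1 := by
    simpa [xgen, PresentedGroup.of, map_mul, map_inv] using h1
  calc xgen p j * xgen p i
      = (xgen p j * xgen p i * (xgen p (j + p - 1))⁻¹ * (xgen p i)⁻¹) *
        (xgen p i * xgen p (j + p - 1)) := by group
    _ = xgen p i * xgen p (j + p - 1) := by rw [h2, one_mul]

/-- pushing a generator inverse: `x_i⁻¹ * x_j = x_{j+p-1} * x_i⁻¹` for `i < j` -/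
lemma rel2 (p : ℕ) {i j : ℕ} (hij : i < j) :
    (xgen p i)⁻¹ * xgen p j = xgen p (j + p - 1) * (xgen p i)⁻¹ := by
  have h := rel1 p hij
  calc (xgen p i)⁻¹ * xgen p j
      = (xgen p i)⁻¹ * (xgen p j * xgen p i) * (xgen p i)⁻¹ := by group
    _ = xgen p (j + p - 1) * (xgen p i)⁻¹ := by rw [h]; group

/-- `x_j⁻¹ * x_i = x_i * x_{j+p-1}⁻¹` for `i < j` -/
lemma rel3 (p : ℕ) {i j : ℕ} (hij : i < j) :
    (xgen p j)⁻¹ * xgen p i = xgen p i * (xgen p (j + p - 1))⁻¹ := by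
  have h := rel1 p hij
  calc (xgen p j)⁻¹ * xgen p i
      = (xgen p j)⁻¹ * (xgen p j * xgen p i) * (xgen p (j + p - 1))⁻¹ := by
        rw [h]; group
    _ = xgen p i * (xgen p (j + p - 1))⁻¹ := by group

lemma k_le (p k : ℕ) (hp : 2 ≤ p) : k ≤ k + p - 1 := by omega

/-- Insert a generator on the left of a sorted product. -/
lemma insertLeft (p : ℕ) (hp : 2 ≤ p) :
    ∀ (l : List ℕ) (k : ℕ), l.Pairwise (· ≤ ·) →
    ∃ l' : List ℕ, l'.Pairwise (· ≤ ·) ∧ xgen p k * Pw p l = Pw p l' ∧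
      ∀ a, a ≤ k → (∀ b ∈ l, a ≤ b) → ∀ b ∈ l', a ≤ b := by
  intro l
  induction l with
  | nil =>
    intro k _
    exact ⟨[k], List.pairwise_singleton _ k, by simp, by
      intro a hak _ b hb; simp at hb; omega⟩
  | cons i t ih =>
    intro k hsort
    rw [List.pairwise_cons] at hsort
    obtain ⟨hit, ht⟩ := hsort
    rcases le_or_gt k i with hki | hik
    · refine ⟨k :: i :: t, ?_, by simp, ?_⟩
      · rw [List.pairwise_cons]
        constructor
        · intro b hb
          rcases List.mem_cons.mp hb with h | h
          · omega
          · exact le_trans hki (hit b h)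
        · rw [List.pairwise_cons]; exact ⟨hit, ht⟩
      · intro a hak hal b hb
        rcases List.mem_cons.mp hb with h | h
        · omega
        · exact hal b h
    · obtain ⟨t', ht'sort, ht'prod, ht'bound⟩ := ih (k + p - 1) ht
      refine ⟨i :: t', ?_, ?_, ?_⟩
      · rw [List.pairwise_cons]
        refine ⟨?_, ht'sort⟩
        intro b hb
        exact ht'bound i (by omega) hit b hb
      · rw [Pw_cons, Pw_cons, ← mul_assoc, rel1 p hik, mul_assoc, ht'prod]
      · intro a hak hal b hb
        rcases List.mem_cons.mp hb with h | h
        · exact h ▸ hal i (List.mem_cons_self)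
        · refine ht'bound a (by omega) ?_ b h
          intro c hc; exact hal c (List.mem_cons_of_mem _ hc)

/-- Insert a generator on the right of a sorted product. -/
lemma insertRight (p : ℕ) (hp : 2 ≤ p) :
    ∀ (l : List ℕ) (k : ℕ), l.Pairwise (· ≤ ·) →
    ∃ l' : List ℕ, l'.Pairwise (· ≤ ·) ∧ Pw p l * xgen p k = Pw p l' := by
  intro l
  induction l with
  | nil => intro k _; exact ⟨[k], List.pairwise_singleton _ k, by simp⟩
  | cons i t ih =>
    intro k hsort
    rw [List.pairwise_cons] at hsort
    obtain ⟨hit, ht⟩ := hsort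
    obtain ⟨t', ht'sort, ht'prod⟩ := ih k ht
    obtain ⟨l', hl'sort, hl'prod, _⟩ := insertLeft p hp t' i ht'sort
    exact ⟨l', hl'sort, by rw [Pw_cons, mul_assoc, ht'prod, hl'prod]⟩

/-- Push a generator inverse rightwards through a sorted positive product. -/
lemma pushInv (p : ℕ) (hp : 2 ≤ p) :
    ∀ (l : List ℕ) (k : ℕ), l.Pairwise (· ≤ ·) →
    (∃ (l' : List ℕ) (k' : ℕ), l'.Pairwise (· ≤ ·) ∧
        (xgen p k)⁻¹ * Pw p l = Pw p l' * (xgen p k')⁻¹ ∧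
        ∀ a, a ≤ k → (∀ b ∈ l, a ≤ b) → ∀ b ∈ l', a ≤ b) ∨
    (∃ l' : List ℕ, l'.Pairwise (· ≤ ·) ∧ (xgen p k)⁻¹ * Pw p l = Pw p l' ∧
        ∀ a, a ≤ k → (∀ b ∈ l, a ≤ b) → ∀ b ∈ l', a ≤ b) := by
  intro l
  induction l with
  | nil =>
    intro k _
    exact Or.inl ⟨[], k, List.Pairwise.nil, by simp, by intro a _ _ b hb; simp at hb⟩
  | cons i t ih =>
    intro k hsort
    rw [List.pairwise_cons] at hsort
    obtain ⟨hit, ht⟩ := hsort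
    rcases lt_trichotomy i k with hik | hik | hik
    · -- i < k : x_k⁻¹ x_i = x_i x_{k+p-1}⁻¹
      have hstep : (xgen p k)⁻¹ * Pw p (i :: t) =
          xgen p i * ((xgen p (k + p - 1))⁻¹ * Pw p t) := by
        rw [Pw_cons, ← mul_assoc, rel3 p hik, mul_assoc]
      rcases ih (k + p - 1) ht with ⟨t', k', ht'sort, ht'prod, ht'bd⟩ |
          ⟨t', ht'sort, ht'prod, ht'bd⟩
      · refine Or.inl ⟨i :: t', k', ?_, ?_, ?_⟩
        · rw [List.pairwise_cons]
          exact ⟨ht'bd i (by omega) hit, ht'sort⟩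
        · rw [hstep, ht'prod, Pw_cons, mul_assoc]
        · intro a hak hal b hb
          rcases List.mem_cons.mp hb with h | h
          · exact h ▸ hal i (List.mem_cons_self)
          · exact ht'bd a (by omega) (fun c hc => hal c (List.mem_cons_of_mem _ hc)) b h
      · refine Or.inr ⟨i :: t', ?_, ?_, ?_⟩
        · rw [List.pairwise_cons]
          exact ⟨ht'bd i (by omega) hit, ht'sort⟩
        · rw [hstep, ht'prod, Pw_cons]
        · intro a hak hal b hb
          rcases List.mem_cons.mp hb with h | h
          · exact h ▸ hal i (List.mem_cons_self)
          · exact ht'bd a (by omega) (fun c hc => hal c (List.mem_cons_of_mem _ hc)) b h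
    · -- i = k : cancel
      subst hik
      refine Or.inr ⟨t, ht, ?_, ?_⟩
      · rw [Pw_cons, ← mul_assoc, inv_mul_cancel, one_mul]
      · intro a _ hal b hb
        exact hal b (List.mem_cons_of_mem _ hb)
    · -- k < i : x_k⁻¹ x_i = x_{i+p-1} x_k⁻¹
      have hstep : (xgen p k)⁻¹ * Pw p (i :: t) =
          xgen p (i + p - 1) * ((xgen p k)⁻¹ * Pw p t) := by
        rw [Pw_cons, ← mul_assoc, rel2 p hik, mul_assoc]
      rcases ih k ht with ⟨t', k', ht'sort, ht'prod, ht'bd⟩ |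
          ⟨t', ht'sort, ht'prod, ht'bd⟩
      · obtain ⟨l', hl'sort, hl'prod, hl'bd⟩ := insertLeft p hp t' (i + p - 1) ht'sort
        refine Or.inl ⟨l', k', hl'sort, ?_, ?_⟩
        · rw [hstep, ht'prod, ← mul_assoc, hl'prod]
        · intro a hak hal b hb
          refine hl'bd a (by have := hal i (List.mem_cons_self); omega)
            (ht'bd a hak (fun c hc => hal c (List.mem_cons_of_mem _ hc))) b hb
      · obtain ⟨l', hl'sort, hl'prod, hl'bd⟩ := insertLeft p hp t' (i + p - 1) ht'sort
        refine Or.inr ⟨l', hl'sort, ?_, ?_⟩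
        · rw [hstep, ht'prod, hl'prod]
        · intro a hak hal b hb
          refine hl'bd a (by have := hal i (List.mem_cons_self); omega)
            (ht'bd a hak (fun c hc => hal c (List.mem_cons_of_mem _ hc))) b hb

/-- The set of elements with a positive-negative normal form. -/
def S (p : ℕ) (g : FP p) : Prop :=
  ∃ l1 l2 : List ℕ, l1.Pairwise (· ≤ ·) ∧ l2.Pairwise (· ≤ ·) ∧
    g = Pw p l1 * (Pw p l2)⁻¹

lemma S_one (p : ℕ) : S p 1 :=
  ⟨[], [], List.Pairwise.nil, List.Pairwise.nil, by simp⟩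

lemma S_mul_gen (p : ℕ) (hp : 2 ≤ p) (k : ℕ) {g : FP p} (hg : S p g) :
    S p (xgen p k * g) := by
  obtain ⟨l1, l2, h1, h2, rfl⟩ := hg
  obtain ⟨l', hl'sort, hl'prod, _⟩ := insertLeft p hp l1 k h1
  exact ⟨l', l2, hl'sort, h2, by rw [← mul_assoc, hl'prod]⟩

lemma S_mul_gen_inv (p : ℕ) (hp : 2 ≤ p) (k : ℕ) {g : FP p} (hg : S p g) :
    S p ((xgen p k)⁻¹ * g) := by
  obtain ⟨l1, l2, h1, h2, rfl⟩ := hg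
  rcases pushInv p hp l1 k h1 with ⟨l', k', hl'sort, hl'prod, _⟩ |
      ⟨l', hl'sort, hl'prod, _⟩
  · obtain ⟨l2', hl2'sort, hl2'prod⟩ := insertRight p hp l2 k' h2
    refine ⟨l', l2', hl'sort, hl2'sort, ?_⟩
    rw [← mul_assoc, hl'prod, mul_assoc, ← mul_inv_rev, hl2'prod]
  · exact ⟨l', l2, hl'sort, h2, by rw [← mul_assoc, hl'prod]⟩

lemma S_all (p : ℕ) (hp : 2 ≤ p) (g : FP p) : S p g := by
  have key : ∀ w : FreeGroup ℕ, ∀ h : FP p, S p h →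
      S p (PresentedGroup.mk (ThompsonRels p) w * h) := by
    intro w
    induction w using FreeGroup.induction_on with
    | C1 => intro h hh; simpa using hh
    | of x => intro h hh; simpa [xgen, PresentedGroup.of] using S_mul_gen p hp x hh
    | inv_of x _ =>
      intro h hh
      have := S_mul_gen_inv p hp x hh
      simpa [xgen, PresentedGroup.of] using this
    | mul x y hx hy =>
      intro h hh
      rw [map_mul, mul_assoc]
      exact hx _ (hy _ hh)
  obtain ⟨w, rfl⟩ := PresentedGroup.mk_surjective (ThompsonRels p) g
  simpa using key w 1 (S_one p)

end ThompsonAux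

theorem stmt0 (p : ℕ) (hp : 2 ≤ p) (g : FP p) :
    ∃ (m n : ℕ) (i : Fin m → ℕ) (j : Fin n → ℕ),
      Monotone i ∧ Monotone j ∧
      g = (List.ofFn (fun k => xgen p (i k))).prod *
          ((List.ofFn (fun k => xgen p (j k))).prod)⁻¹ := by
  obtain ⟨l1, l2, h1, h2, hg⟩ := ThompsonAux.S_all p hp g
  refine ⟨l1.length, l2.length, l1.get, l2.get, ?_, ?_, ?_⟩
  · rw [← List.sortedLE_ofFn_iff, List.ofFn_get]; exact List.sortedLE_iff_pairwise.mpr h1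
  · rw [← List.sortedLE_ofFn_iff, List.ofFn_get]; exact List.sortedLE_iff_pairwise.mpr h2
  · have e1 : (List.ofFn fun k => xgen p (l1.get k)) = l1.map (xgen p) := by
      apply List.ext_getElem <;> simp
    have e2 : (List.ofFn fun k => xgen p (l2.get k)) = l2.map (xgen p) := by
      apply List.ext_getElem <;> simp
    rw [e1, e2]
    exact hg
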